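/- arXiv:1904.01473 — 5 statements merged into one kernel-verified Lean document; each statement's English description precedes it below -/
import Mathlib

section
/- The supremum of the mutual information I(Q;W) over all probability distributions Q on X is equal to C* = log s − H(W(1,·)), i.e., the capacity of the channel W equals log s minus the entropy of the row of input 1, and this supremum is attained. -/
open Real BigOperators Finset

/-- Entropy of a finite probability vector, with the convention `0 * log 0 = 0`
(automatic since `Real.log 0 = 0`). -/
noncomputable def ent {n : ℕ} (p : Fin n → ℝ) : ℝ := -∑ y, p y * Real.log (p y)

/-- `Q` is a probability distribution on `Fin n`. -/
def IsProbDist {n : ℕ} (Q : Fin n → ℝ) : Prop := (∀ x, 0 ≤ Q x) ∧ ∑ x, Q x = 1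

/-- Output distribution `(QW)(y) = ∑ x, Q x * W x y`. -/
noncomputable def outDist {r s : ℕ} (Q : Fin r → ℝ) (W : Fin r → Fin s → ℝ) (y : Fin s) : ℝ :=
  ∑ x, Q x * W x y

/-- Mutual information `I(Q;W)`; terms with `Q x * W x y = 0` vanish automatically. -/
noncomputable def mutInfo {r s : ℕ} (Q : Fin r → ℝ) (W : Fin r → Fin s → ℝ) : ℝ :=
  ∑ x, ∑ y, Q x * W x y * Real.log (W x y / outDist Q W y)

/-- Per-input information `I(x;Q,W)`. -/
noncomputable def perInput {r s : ℕ} (x : Fin r) (Q : Fin r → ℝ) (W : Fin r → Fin s → ℝ) : ℝ :=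
  ∑ y, W x y * Real.log (W x y / outDist Q W y)

/-- Channel assumptions: `W` is a transition matrix on inputs `Fin (r+3)` (so `r ≥ 3`)
and outputs `Fin (s+2)` (so `s ≥ 2`), with (i) uniform row at input `0`, (ii) the rows of
nonzero inputs are permutations of the row of input `1`, and (iii) the column sums over
nonzero inputs are constant (weak symmetry of the nonzero-input sub-channel). -/
def PTTOneWay {r s : ℕ} (W : Fin (r + 3) → Fin (s + 2) → ℝ) : Prop :=
  (∀ x y, 0 ≤ W x y) ∧
  (∀ x, ∑ y, W x y = 1) ∧
  (∀ y, W 0 y = 1 / ((s : ℝ) + 2)) ∧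
  (∀ x : Fin (r + 3), x ≠ 0 → ∃ σ : Equiv.Perm (Fin (s + 2)), ∀ y, W x y = W 1 (σ y)) ∧
  (∀ y y' : Fin (s + 2),
    ∑ x ∈ Finset.univ.filter (fun x => x ≠ (0 : Fin (r + 3))), W x y =
    ∑ x ∈ Finset.univ.filter (fun x => x ≠ (0 : Fin (r + 3))), W x y')

lemma gibbs_le {n : ℕ} (hn : 0 < n) (p : Fin n → ℝ) (h0 : ∀ i, 0 ≤ p i)
    (h1 : ∑ i, p i = 1) : -∑ i, p i * Real.log (p i) ≤ Real.log n := by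
  have hn' : (0:ℝ) < (n:ℝ) := by exact_mod_cast hn
  have hu : (0:ℝ) < 1 / n := by positivity
  have key : ∀ i : Fin n, p i * Real.log (1/(n:ℝ)) - p i * Real.log (p i) ≤ 1/(n:ℝ) - p i := by
    intro i
    rcases (h0 i).eq_or_lt with h | h
    · simp [← h]
    · have hlog := Real.log_le_sub_one_of_pos (show (0:ℝ) < (1/(n:ℝ)) / p i by positivity)
      rw [Real.log_div hu.ne' h.ne'] at hlog
      have h2 : p i * (Real.log (1/(n:ℝ)) - Real.log (p i)) ≤ p i * ((1/(n:ℝ))/p i - 1) :=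
        mul_le_mul_of_nonneg_left hlog h.le
      have h3 : p i * ((1/(n:ℝ))/p i - 1) = 1/(n:ℝ) - p i := by
        field_simp
      nlinarith [h2]
  have hsum := Finset.sum_le_sum (fun i (_ : i ∈ Finset.univ) => key i)
  rw [Finset.sum_sub_distrib, ← Finset.sum_mul, h1, Finset.sum_sub_distrib, h1] at hsum
  simp only [Finset.sum_const, Finset.card_univ, Fintype.card_fin, nsmul_eq_mul] at hsum
  rw [one_div, Real.log_inv] at hsum
  have hni : (n:ℝ) * ((n:ℝ))⁻¹ = 1 := by field_simp
  linarith [hsum]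

lemma rowlog {n : ℕ} (q : Fin n → ℝ) (h0 : ∀ y, 0 ≤ q y) (c : ℝ) (hc : 0 < c) :
    ∑ y, q y * Real.log (q y * c) = ∑ y, q y * Real.log (q y) + (∑ y, q y) * Real.log c := by
  rw [Finset.sum_mul, ← Finset.sum_add_distrib]
  refine Finset.sum_congr rfl (fun y _ => ?_)
  rcases (h0 y).eq_or_lt with h | h
  · simp [← h]
  · rw [Real.log_mul h.ne' hc.ne']; ring

/-- The supremum of the mutual information over all input distributions equals
`C* = log s − H(W(1,·))`, and it is attained. -/
theorem stmt0 (r s : ℕ) (W : Fin (r + 3) → Fin (s + 2) → ℝ) (hW : PTTOneWay W) :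
    IsGreatest {I : ℝ | ∃ Q : Fin (r + 3) → ℝ, IsProbDist Q ∧ I = mutInfo Q W}
      (Real.log ((s : ℝ) + 2) - ent (fun y => W 1 y)) := by
  obtain ⟨hpos, hrowsum, hrow0, hperm, hcol⟩ := hW
  have hs : (0:ℝ) < (s:ℝ) + 2 := by positivity
  have hr : (0:ℝ) < (r:ℝ) + 2 := by positivity
  have hcast : ((s + 2 : ℕ) : ℝ) = (s:ℝ) + 2 := by push_cast; ring
  have hW1nn : ∀ y, 0 ≤ W 1 y := fun y => hpos 1 y
  have hW1sum : ∑ y, W 1 y = 1 := hrowsum 1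
  have hentW1 : ent (fun y => W 1 y) ≤ Real.log ((s:ℝ)+2) := by
    have h := gibbs_le (n := s+2) (by omega) (fun y => W 1 y) hW1nn hW1sum
    rw [hcast] at h
    exact h
  have hsplit : ∀ f : Fin (r+3) → ℝ, ∑ x, f x = f 0 + ∑ x ∈ Finset.univ.erase 0, f x :=
    fun f => (Finset.add_sum_erase Finset.univ f (Finset.mem_univ 0)).symm
  have hcard : (Finset.univ.erase (0 : Fin (r+3))).card = r + 2 := by
    rw [Finset.card_erase_of_mem (Finset.mem_univ 0), Finset.card_univ, Fintype.card_fin]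
    omega
  -- column sums over nonzero inputs are all (r+2)/(s+2)
  have hcol' : ∀ y y' : Fin (s+2),
      ∑ x ∈ Finset.univ.erase 0, W x y = ∑ x ∈ Finset.univ.erase 0, W x y' := by
    intro y y'
    have h := hcol y y'
    rwa [Finset.filter_ne'] at h
  have hcolsum : ∀ y, ∑ x ∈ Finset.univ.erase 0, W x y = ((r:ℝ)+2)/((s:ℝ)+2) := by
    intro y
    have htot : ∑ y' : Fin (s+2), ∑ x ∈ Finset.univ.erase 0, W x y' = (r:ℝ)+2 := by
      rw [Finset.sum_comm]
      rw [Finset.sum_congr rfl (fun x _ => hrowsum x), Finset.sum_const, hcard, nsmul_eq_mul]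
      push_cast; ring
    have hconst : ∑ y' : Fin (s+2), ∑ x ∈ Finset.univ.erase 0, W x y'
        = ((s:ℝ)+2) * ∑ x ∈ Finset.univ.erase 0, W x y := by
      rw [Finset.sum_congr rfl (fun y' _ => hcol' y' y), Finset.sum_const, Finset.card_univ,
        Fintype.card_fin, nsmul_eq_mul]
      push_cast; ring
    rw [hconst] at htot
    rw [eq_div_iff hs.ne']
    linarith [htot]
  -- row-log sums
  have hrowlog_eq : ∀ x : Fin (r+3), x ≠ 0 →
      ∑ y, W x y * Real.log (W x y) = ∑ y, W 1 y * Real.log (W 1 y) := by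
    intro x hx
    obtain ⟨σ, hσ⟩ := hperm x hx
    calc ∑ y, W x y * Real.log (W x y) = ∑ y, W 1 (σ y) * Real.log (W 1 (σ y)) := by
          simp only [hσ]
      _ = ∑ y, W 1 y * Real.log (W 1 y) :=
          Equiv.sum_comp σ (fun y => W 1 y * Real.log (W 1 y))
  have hrowlog0 : ∑ y, W 0 y * Real.log (W 0 y) = -Real.log ((s:ℝ)+2) := by
    simp only [hrow0]
    rw [Finset.sum_const, Finset.card_univ, Fintype.card_fin, nsmul_eq_mul, one_div,
      Real.log_inv]
    push_cast
    field_simp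
  have hentW1' : ∑ y, W 1 y * Real.log (W 1 y) = -(ent fun y => W 1 y) := by
    unfold ent; ring
  constructor
  · -- membership: uniform distribution on nonzero inputs
    refine ⟨fun x => if x = 0 then 0 else 1/((r:ℝ)+2), ⟨fun x => ?_, ?_⟩, ?_⟩
    · dsimp only
      split
      · exact le_rfl
      · positivity
    · rw [hsplit]
      simp only [if_pos rfl, zero_add]
      rw [Finset.sum_congr rfl (fun x hx => if_neg (Finset.mem_erase.mp hx).1),
        Finset.sum_const, hcard, nsmul_eq_mul]
      push_cast
      field_simp
      ring
    · set Q : Fin (r+3) → ℝ := fun x => if x = 0 then 0 else 1/((r:ℝ)+2) with hQdef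
      have hout : ∀ y, outDist Q W y = 1/((s:ℝ)+2) := by
        intro y
        unfold outDist
        rw [hsplit]
        simp only [hQdef, if_pos rfl, zero_mul, zero_add]
        rw [Finset.sum_congr rfl
          (fun x hx => by rw [if_neg (Finset.mem_erase.mp hx).1]),
          ← Finset.mul_sum, hcolsum y]
        field_simp
      have hinner : ∀ x : Fin (r+3), x ≠ 0 →
          ∑ y, W x y * Real.log (W x y / outDist Q W y)
          = Real.log ((s:ℝ)+2) - ent (fun y => W 1 y) := by
        intro x hx
        have hdiv : ∀ y, W x y / outDist Q W y = W x y * ((s:ℝ)+2) := by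
          intro y; rw [hout y]; field_simp
        simp only [hdiv]
        obtain ⟨σ, hσ⟩ := hperm x hx
        simp only [hσ]
        rw [Equiv.sum_comp σ (fun y => W 1 y * Real.log (W 1 y * ((s:ℝ)+2)))]
        rw [rowlog (fun y => W 1 y) hW1nn _ hs, hW1sum, one_mul, hentW1']
        ring
      unfold mutInfo
      rw [hsplit]
      have h0term : ∑ y, Q 0 * W 0 y * Real.log (W 0 y / outDist Q W y) = 0 := by
        simp [hQdef]
      rw [h0term, zero_add]
      have hxterm : ∀ x ∈ Finset.univ.erase (0 : Fin (r+3)),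
          ∑ y, Q x * W x y * Real.log (W x y / outDist Q W y)
          = (1/((r:ℝ)+2)) * (Real.log ((s:ℝ)+2) - ent fun y => W 1 y) := by
        intro x hx
        have hx0 := (Finset.mem_erase.mp hx).1
        have hq : Q x = 1/((r:ℝ)+2) := by simp [hQdef, hx0]
        calc ∑ y, Q x * W x y * Real.log (W x y / outDist Q W y)
            = Q x * ∑ y, W x y * Real.log (W x y / outDist Q W y) := by
              rw [Finset.mul_sum]
              exact Finset.sum_congr rfl (fun y _ => by ring)
          _ = _ := by rw [hq, hinner x hx0]
      rw [Finset.sum_congr rfl hxterm, Finset.sum_const, hcard, nsmul_eq_mul]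
      push_cast
      field_simp
  · rintro I ⟨Q, ⟨hQ0, hQ1⟩, rfl⟩
    have houtnn : ∀ y, 0 ≤ outDist Q W y := fun y =>
      Finset.sum_nonneg (fun x _ => mul_nonneg (hQ0 x) (hpos x y))
    have houtsum : ∑ y, outDist Q W y = 1 := by
      unfold outDist
      rw [Finset.sum_comm]
      calc ∑ x, ∑ y, Q x * W x y = ∑ x, Q x * ∑ y, W x y := by
            simp [Finset.mul_sum]
        _ = 1 := by simp only [hrowsum, mul_one]; exact hQ1
    have hzero : ∀ x y, outDist Q W y = 0 → Q x * W x y = 0 := by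
      intro x y h
      have := (Finset.sum_eq_zero_iff_of_nonneg
        (fun x' (_ : x' ∈ Finset.univ) => mul_nonneg (hQ0 x') (hpos x' y))).mp h
      exact this x (Finset.mem_univ x)
    have hterm : ∀ x y, Q x * W x y * Real.log (W x y / outDist Q W y)
        = Q x * (W x y * Real.log (W x y)) - (Q x * W x y) * Real.log (outDist Q W y) := by
      intro x y
      rcases (hpos x y).eq_or_lt with h | h
      · simp [← h]
      rcases (houtnn y).eq_or_lt with h2 | h2
      · have h0 := hzero x y h2.symm
        have h0' : Q x * (W x y * Real.log (W x y)) = (Q x * W x y) * Real.log (W x y) := by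
          ring
        rw [h0', h0]
        simp
      · rw [Real.log_div h.ne' h2.ne']
        ring
    have hdecomp : mutInfo Q W
        = (∑ x, Q x * ∑ y, W x y * Real.log (W x y)) - ∑ y, outDist Q W y * Real.log (outDist Q W y) := by
      unfold mutInfo
      rw [Finset.sum_congr rfl (fun x _ => Finset.sum_congr rfl (fun y _ => hterm x y))]
      rw [Finset.sum_congr rfl (fun x _ => Finset.sum_sub_distrib (s := Finset.univ) _ _)]
      rw [Finset.sum_sub_distrib]
      congr 1
      · exact Finset.sum_congr rfl (fun x _ => by rw [Finset.mul_sum])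
      · rw [Finset.sum_comm]
        exact Finset.sum_congr rfl (fun y _ => by rw [← Finset.sum_mul]; rfl)
    have hA : ∑ x, Q x * ∑ y, W x y * Real.log (W x y) ≤ -(ent fun y => W 1 y) := by
      calc ∑ x, Q x * ∑ y, W x y * Real.log (W x y)
          ≤ ∑ x, Q x * ∑ y, W 1 y * Real.log (W 1 y) := by
            refine Finset.sum_le_sum (fun x _ => ?_)
            rcases eq_or_ne x 0 with rfl | hx
            · refine mul_le_mul_of_nonneg_left ?_ (hQ0 0)
              rw [hrowlog0, hentW1']
              linarith [hentW1]
            · rw [hrowlog_eq x hx]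
        _ = -(ent fun y => W 1 y) := by
            rw [← Finset.sum_mul, hQ1, one_mul, hentW1']
    have hB : -∑ y, outDist Q W y * Real.log (outDist Q W y) ≤ Real.log ((s:ℝ)+2) := by
      have h := gibbs_le (n := s+2) (by omega) (outDist Q W) houtnn houtsum
      rwa [hcast] at h
    rw [hdecomp]
    linarith [hA, hB]
end

section
/- For the input distribution P* defined by P*(0) = 0 and P*(x) = 1/(r−1) for every x ≠ 0, the mutual information satisfies I(P*;W) = log s − H(W(1,·)); that is, P* achieves the capacity C* of the channel W. -/
open Real BigOperators Finset

/-- The input distribution `P*` uniform on nonzero inputs achieves `C* = log s − H(W(1,·))`. -/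
theorem stmt1 (r s : ℕ) (W : Fin (r + 3) → Fin (s + 2) → ℝ) (hW : PTTOneWay W) :
    mutInfo (fun x : Fin (r + 3) => if x = 0 then (0 : ℝ) else ((r : ℝ) + 2)⁻¹) W =
      Real.log ((s : ℝ) + 2) - ent (fun y => W 1 y) := by
  obtain ⟨hpos, hrow, h0, hperm, hcol⟩ := hW
  set Q : Fin (r + 3) → ℝ := fun x => if x = 0 then (0 : ℝ) else ((r : ℝ) + 2)⁻¹ with hQdef
  have hs2 : (0:ℝ) < (s:ℝ) + 2 := by positivity
  have hr2 : (0:ℝ) < (r:ℝ) + 2 := by positivity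
  have hcard : (Finset.univ.filter (fun x => x ≠ (0 : Fin (r + 3)))).card = r + 2 := by
    rw [Finset.filter_ne']
    simp
  -- constant column sum value
  have hconst : ∀ y, ∑ x ∈ Finset.univ.filter (fun x => x ≠ (0 : Fin (r + 3))), W x y
      = ((r:ℝ)+2)/((s:ℝ)+2) := by
    intro y
    have h1 : ∑ y' : Fin (s+2), ∑ x ∈ Finset.univ.filter (fun x => x ≠ (0 : Fin (r + 3))), W x y'
        = ((s:ℝ)+2) * ∑ x ∈ Finset.univ.filter (fun x => x ≠ (0 : Fin (r + 3))), W x y := by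
      rw [Finset.sum_congr rfl (fun y' _ => hcol y' y), Finset.sum_const, Finset.card_univ]
      simp
      try push_cast
      try ring
    have h2 : ∑ y' : Fin (s+2), ∑ x ∈ Finset.univ.filter (fun x => x ≠ (0 : Fin (r + 3))), W x y'
        = (r:ℝ)+2 := by
      rw [Finset.sum_comm]
      rw [Finset.sum_congr rfl (fun x _ => hrow x)]
      rw [Finset.sum_const, hcard]
      push_cast; ring
    rw [h2] at h1
    field_simp
    linarith
  have hout : ∀ y, outDist Q W y = ((s:ℝ)+2)⁻¹ := by
    intro y
    have : outDist Q W y = ∑ x ∈ Finset.univ.filter (fun x => x ≠ (0 : Fin (r + 3))),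
        ((r:ℝ)+2)⁻¹ * W x y := by
      rw [outDist, Finset.sum_filter]
      refine Finset.sum_congr rfl fun x _ => ?_
      by_cases h : x = 0 <;> simp [Q, h]
    rw [this, ← Finset.mul_sum, hconst y]
    field_simp
  have hL : ∀ x : Fin (r + 3), x ≠ 0 →
      ∑ y, W x y * Real.log (W x y) = ∑ y, W 1 y * Real.log (W 1 y) := by
    intro x hx
    obtain ⟨σ, hσ⟩ := hperm x hx
    calc ∑ y, W x y * Real.log (W x y)
        = ∑ y, W 1 (σ y) * Real.log (W 1 (σ y)) := by simp [hσ]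
      _ = _ := Equiv.sum_comp σ (fun y => W 1 y * Real.log (W 1 y))
  have hterm : ∀ (x : Fin (r+3)) (y : Fin (s+2)),
      Q x * W x y * Real.log (W x y / outDist Q W y)
      = Q x * (W x y * Real.log (W x y) + W x y * Real.log ((s:ℝ)+2)) := by
    intro x y
    rw [hout y]
    by_cases h : W x y = 0
    · simp [h]
    · rw [div_eq_mul_inv, inv_inv, Real.log_mul h (by positivity)]
      ring
  have hinner : ∀ x : Fin (r+3),
      ∑ y, Q x * W x y * Real.log (W x y / outDist Q W y)
      = Q x * ((∑ y, W x y * Real.log (W x y)) + Real.log ((s:ℝ)+2)) := by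
    intro x
    rw [Finset.sum_congr rfl (fun y _ => hterm x y)]
    rw [← Finset.mul_sum, Finset.sum_add_distrib, ← Finset.sum_mul, hrow x]
    ring
  rw [mutInfo, Finset.sum_congr rfl (fun x _ => hinner x)]
  rw [← Finset.sum_filter_add_sum_filter_not Finset.univ (fun x => x ≠ (0 : Fin (r+3)))
    (fun x => Q x * ((∑ y, W x y * Real.log (W x y)) + Real.log ((s:ℝ)+2)))]
  have hz : ∑ x ∈ Finset.univ.filter (fun x => ¬ x ≠ (0 : Fin (r+3))),
      Q x * ((∑ y, W x y * Real.log (W x y)) + Real.log ((s:ℝ)+2)) = 0 := by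
    apply Finset.sum_eq_zero
    intro x hx
    simp only [Finset.mem_filter, not_not] at hx
    simp [Q, hx.2]
  rw [hz, add_zero]
  have hmain : ∀ x ∈ Finset.univ.filter (fun x => x ≠ (0 : Fin (r+3))),
      Q x * ((∑ y, W x y * Real.log (W x y)) + Real.log ((s:ℝ)+2))
      = ((r:ℝ)+2)⁻¹ * ((∑ y, W 1 y * Real.log (W 1 y)) + Real.log ((s:ℝ)+2)) := by
    intro x hx
    simp only [Finset.mem_filter] at hx
    rw [hL x hx.2]
    simp [Q, hx.2]
  rw [Finset.sum_congr rfl hmain, Finset.sum_const, hcard, ent]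
  push_cast
  field_simp
  have h2r : ((r:ℝ)+2) * ((r:ℝ)+2)⁻¹ = 1 := mul_inv_cancel₀ hr2.ne'
  linear_combination (∑ y, W 1 y * Real.log (W 1 y) + Real.log ((s:ℝ)+2)) * h2r
end

section
/- Let P* be the input distribution with P*(0) = 0 and P*(x) = 1/(r−1) for x ≠ 0. Then the per-input information of the input 0 is dominated by that of every nonzero input: I(0;P*,W) ≤ I(x;P*,W) for every x ≠ 0 (Karush–Kuhn–Tucker optimality check for P*). -/
open Real BigOperators Finset

/-- KKT optimality check: under `P*` (uniform on nonzero inputs), the per-input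
information of input `0` is dominated by that of every nonzero input. -/
theorem stmt5 (r s : ℕ) (W : Fin (r + 3) → Fin (s + 2) → ℝ) (hW : PTTOneWay W) :
    ∀ x : Fin (r + 3), x ≠ 0 →
      perInput 0 (fun x' : Fin (r + 3) => if x' = 0 then (0 : ℝ) else ((r : ℝ) + 2)⁻¹) W ≤
      perInput x (fun x' : Fin (r + 3) => if x' = 0 then (0 : ℝ) else ((r : ℝ) + 2)⁻¹) W := by
  obtain ⟨hpos, hrow, hunif, hperm, hcol⟩ := hW
  set Q : Fin (r + 3) → ℝ := fun x' => if x' = 0 then (0 : ℝ) else ((r : ℝ) + 2)⁻¹ with hQ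
  have hs2 : (0 : ℝ) < (s : ℝ) + 2 := by positivity
  have hr2 : (0 : ℝ) < (r : ℝ) + 2 := by positivity
  -- card of nonzero inputs
  have hcard : (Finset.univ.filter (fun x => x ≠ (0 : Fin (r + 3)))).card = r + 2 := by
    rw [Finset.filter_ne', Finset.card_erase_of_mem (Finset.mem_univ _)]
    simp
  -- column sum value
  have hS : ∀ y, ∑ x ∈ Finset.univ.filter (fun x => x ≠ (0 : Fin (r + 3))), W x y
      = ((r : ℝ) + 2) / ((s : ℝ) + 2) := by
    intro y
    have hsum : ∑ y' : Fin (s + 2), (∑ x ∈ Finset.univ.filter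
        (fun x => x ≠ (0 : Fin (r + 3))), W x y') = (r : ℝ) + 2 := by
      rw [Finset.sum_comm]
      rw [Finset.sum_congr rfl (fun x _ => hrow x)]
      simp [hcard]
    have hconst : ∑ y' : Fin (s + 2), (∑ x ∈ Finset.univ.filter
        (fun x => x ≠ (0 : Fin (r + 3))), W x y')
        = ((s : ℝ) + 2) * ∑ x ∈ Finset.univ.filter (fun x => x ≠ (0 : Fin (r + 3))), W x y := by
      rw [Finset.sum_congr rfl (fun y' _ => hcol y' y)]
      simp
    rw [hconst] at hsum
    field_simp
    linarith [hsum]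
  -- output distribution is uniform
  have hout : ∀ y, outDist Q W y = 1 / ((s : ℝ) + 2) := by
    intro y
    unfold outDist
    rw [← Finset.sum_filter_add_sum_filter_not Finset.univ (fun x => x ≠ (0 : Fin (r + 3)))]
    have h1 : ∑ x ∈ Finset.univ.filter (fun x => x ≠ (0 : Fin (r + 3))), Q x * W x y
        = ((r : ℝ) + 2)⁻¹ * ∑ x ∈ Finset.univ.filter (fun x => x ≠ (0 : Fin (r + 3))), W x y := by
      rw [Finset.mul_sum]
      refine Finset.sum_congr rfl ?_
      intro x hx
      simp only [Finset.mem_filter] at hx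
      simp [hQ, hx.2]
    have h2 : ∑ x ∈ Finset.univ.filter (fun x => ¬ x ≠ (0 : Fin (r + 3))), Q x * W x y = 0 := by
      apply Finset.sum_eq_zero
      intro x hx
      simp only [Finset.mem_filter, not_not] at hx
      simp [hQ, hx.2]
    rw [h1, h2, hS y]
    field_simp
    ring
  -- perInput 0 = 0
  have h0 : perInput 0 Q W = 0 := by
    unfold perInput
    apply Finset.sum_eq_zero
    intro y _
    rw [hunif y, hout y, div_self (by positivity), Real.log_one, mul_zero]
  intro x hx
  rw [h0]
  -- perInput x ≥ 0 by Gibbs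
  unfold perInput
  have key : ∀ y : Fin (s + 2), W x y - outDist Q W y ≤ W x y * Real.log (W x y / outDist Q W y) := by
    intro y
    have houty : outDist Q W y = 1 / ((s : ℝ) + 2) := hout y
    have houtpos : 0 < outDist Q W y := by rw [houty]; positivity
    rcases eq_or_lt_of_le (hpos x y) with h | h
    · rw [← h]; simp; linarith
    · have hlog : Real.log (outDist Q W y / W x y) ≤ outDist Q W y / W x y - 1 :=
        Real.log_le_sub_one_of_pos (by positivity)
      have hlogeq : Real.log (W x y / outDist Q W y) = - Real.log (outDist Q W y / W x y) := by
        rw [← Real.log_inv]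
        congr 1
        field_simp
      rw [hlogeq]
      have := mul_le_mul_of_nonneg_left hlog (le_of_lt h)
      rw [mul_sub, mul_div_cancel₀ _ (ne_of_gt h)] at this
      nlinarith
  calc (0 : ℝ) = ∑ y, (W x y - outDist Q W y) := by
        rw [Finset.sum_sub_distrib, hrow x]
        have : ∑ y, outDist Q W y = 1 := by
          rw [Finset.sum_congr rfl (fun y _ => hout y)]
          simp
          field_simp
        rw [this]; ring
    _ ≤ ∑ y, W x y * Real.log (W x y / outDist Q W y) :=
        Finset.sum_le_sum (fun y _ => key y)
end

section
/- For every α with 0 ≤ α ≤ 1, let P_α be the input distribution with P_α(0) = α and P_α(x) = (1−α)/(r−1) for x ≠ 0. Then I(P_α;W) = (1−α)·C*, where C* = log s − H(W(1,·)). -/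
open Real BigOperators Finset

/-- For `P_α` with mass `α` on input `0` and uniform on nonzero inputs,
`I(P_α;W) = (1 − α) C*` where `C* = log s − H(W(1,·))`. -/
theorem stmt6 (r s : ℕ) (W : Fin (r + 3) → Fin (s + 2) → ℝ) (hW : PTTOneWay W)
    (α : ℝ) (hα0 : 0 ≤ α) (hα1 : α ≤ 1) :
    mutInfo (fun x : Fin (r + 3) => if x = 0 then α else (1 - α) / ((r : ℝ) + 2)) W =
      (1 - α) * (Real.log ((s : ℝ) + 2) - ent (fun y => W 1 y)) := by
  obtain ⟨hpos, hrow, hunif, hperm, hcolc⟩ := hW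
  set Q : Fin (r + 3) → ℝ := fun x => if x = 0 then α else (1 - α) / ((r : ℝ) + 2) with hQ
  have hs : (0:ℝ) < (s:ℝ) + 2 := by positivity
  have hr : (0:ℝ) < (r:ℝ) + 2 := by positivity
  -- filter = erase
  have hfe : (Finset.univ.filter (fun x => x ≠ (0 : Fin (r + 3)))) = Finset.univ.erase 0 :=
    Finset.filter_ne' _ _
  have hcard : (Finset.univ.erase (0 : Fin (r+3))).card = r + 2 := by
    rw [Finset.card_erase_of_mem (Finset.mem_univ _)]
    simp
  -- column sums over nonzero inputs
  have hcol : ∀ y, ∑ x ∈ Finset.univ.erase (0 : Fin (r+3)), W x y = ((r:ℝ)+2)/((s:ℝ)+2) := by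
    intro y
    have h1 : ∑ y' : Fin (s+2), ∑ x ∈ Finset.univ.erase (0 : Fin (r+3)), W x y'
        = ((r:ℝ)+2) := by
      rw [Finset.sum_comm]
      have : ∀ x ∈ Finset.univ.erase (0 : Fin (r+3)), ∑ y' : Fin (s+2), W x y' = 1 :=
        fun x _ => hrow x
      rw [Finset.sum_congr rfl this]
      simp [hcard]
    have h2 : ∀ y', ∑ x ∈ Finset.univ.erase (0 : Fin (r+3)), W x y'
        = ∑ x ∈ Finset.univ.erase (0 : Fin (r+3)), W x y := by
      intro y'
      have := hcolc y' y
      rwa [hfe] at this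
    rw [Finset.sum_congr rfl (fun y' _ => h2 y')] at h1
    rw [Finset.sum_const, Finset.card_univ, Fintype.card_fin] at h1
    have : ((s:ℝ)+2) * ∑ x ∈ Finset.univ.erase (0 : Fin (r+3)), W x y = ((r:ℝ)+2) := by
      rw [← h1]; push_cast; ring
    rw [eq_div_iff (ne_of_gt hs)]
    linarith [this]
  -- output distribution is uniform
  have hout : ∀ y, outDist Q W y = 1 / ((s:ℝ)+2) := by
    intro y
    unfold outDist
    rw [← Finset.add_sum_erase _ _ (Finset.mem_univ (0 : Fin (r+3)))]
    have : ∀ x ∈ Finset.univ.erase (0 : Fin (r+3)), Q x * W x y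
        = ((1-α)/((r:ℝ)+2)) * W x y := by
      intro x hx
      have hx0 : x ≠ 0 := Finset.ne_of_mem_erase hx
      simp [hQ, hx0]
    rw [Finset.sum_congr rfl this, ← Finset.mul_sum, hcol y]
    simp only [hQ, if_pos rfl, hunif]
    field_simp
    ring
  -- inner sum simplification
  have hinner : ∀ x : Fin (r+3), ∑ y, W x y * Real.log (W x y / outDist Q W y)
      = Real.log ((s:ℝ)+2) + ∑ y, W x y * Real.log (W x y) := by
    intro x
    have : ∀ y : Fin (s+2), W x y * Real.log (W x y / outDist Q W y)
        = W x y * Real.log ((s:ℝ)+2) + W x y * Real.log (W x y) := by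
      intro y
      rw [hout y]
      rcases eq_or_lt_of_le (hpos x y) with h | h
      · simp [← h]
      · rw [div_div_eq_mul_div, div_one, Real.log_mul (ne_of_gt h) (ne_of_gt hs)]
        ring
    rw [Finset.sum_congr rfl (fun y _ => this y), Finset.sum_add_distrib,
      ← Finset.sum_mul, hrow x, one_mul]
  -- inner at 0 is 0
  have hzero : ∑ y, W 0 y * Real.log (W 0 y) = - Real.log ((s:ℝ)+2) := by
    have : ∀ y : Fin (s+2), W 0 y * Real.log (W 0 y)
        = (1/((s:ℝ)+2)) * Real.log (1/((s:ℝ)+2)) := by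
      intro y; rw [hunif y]
    rw [Finset.sum_congr rfl (fun y _ => this y), Finset.sum_const, Finset.card_univ,
      Fintype.card_fin]
    rw [Real.log_div one_ne_zero (ne_of_gt hs), Real.log_one]
    rw [nsmul_eq_mul]
    push_cast
    linear_combination (-(Real.log ((s:ℝ)+2))) * mul_one_div_cancel (ne_of_gt hs)
  -- inner at nonzero x equals inner at 1
  have hnz : ∀ x : Fin (r+3), x ≠ 0 →
      ∑ y, W x y * Real.log (W x y) = ∑ y, W 1 y * Real.log (W 1 y) := by
    intro x hx
    obtain ⟨σ, hσ⟩ := hperm x hx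
    calc ∑ y, W x y * Real.log (W x y)
        = ∑ y, W 1 (σ y) * Real.log (W 1 (σ y)) := by
          exact Finset.sum_congr rfl (fun y _ => by rw [hσ y])
      _ = ∑ y, W 1 y * Real.log (W 1 y) :=
          Equiv.sum_comp σ (fun y => W 1 y * Real.log (W 1 y))
  -- assemble
  unfold mutInfo
  have hterm : ∀ x : Fin (r+3), ∑ y, Q x * W x y * Real.log (W x y / outDist Q W y)
      = Q x * (Real.log ((s:ℝ)+2) + ∑ y, W x y * Real.log (W x y)) := by
    intro x
    rw [← hinner x, Finset.mul_sum]
    exact Finset.sum_congr rfl (fun y _ => by ring)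
  rw [Finset.sum_congr rfl (fun x _ => hterm x)]
  rw [← Finset.add_sum_erase _ _ (Finset.mem_univ (0 : Fin (r+3)))]
  have h0 : Q 0 * (Real.log ((s:ℝ)+2) + ∑ y, W 0 y * Real.log (W 0 y)) = 0 := by
    rw [hzero]; ring
  have hrest : ∀ x ∈ Finset.univ.erase (0 : Fin (r+3)),
      Q x * (Real.log ((s:ℝ)+2) + ∑ y, W x y * Real.log (W x y))
      = ((1-α)/((r:ℝ)+2)) * (Real.log ((s:ℝ)+2) + ∑ y, W 1 y * Real.log (W 1 y)) := by
    intro x hx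
    have hx0 : x ≠ 0 := Finset.ne_of_mem_erase hx
    rw [hnz x hx0]
    simp [hQ, hx0]
  rw [h0, zero_add, Finset.sum_congr rfl hrest, Finset.sum_const, hcard]
  unfold ent
  push_cast
  rw [nsmul_eq_mul]
  push_cast
  linear_combination ((1 - α) * (Real.log ((s:ℝ)+2) + ∑ y, W 1 y * Real.log (W 1 y))) * mul_one_div_cancel (ne_of_gt hr)
end

section
/- For every α with 0 ≤ α ≤ 1 and every input distribution Q on X with Q(0) = α, the mutual information is bounded as I(Q;W) ≤ (1−α)·C*, where C* = log s − H(W(1,·)). (Among all input distributions placing mass α on the input 0, the one uniform on X∖{0} maximizes the mutual information.) -/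
open Real BigOperators Finset

lemma perTermBound (n p : ℝ) (hn : 0 < n) (hp : 0 ≤ p) :
    p * (-(Real.log n) - Real.log p) ≤ 1 / n - p := by
  rcases eq_or_lt_of_le hp with h | h
  · simp [← h]
    positivity
  · have hnp : (0:ℝ) < 1 / (n * p) := by positivity
    have h1 : Real.log (1 / (n * p)) ≤ 1 / (n * p) - 1 :=
      Real.log_le_sub_one_of_pos hnp
    have h2 : Real.log (1 / (n * p)) = -(Real.log n) - Real.log p := by
      rw [one_div, Real.log_inv, Real.log_mul hn.ne' h.ne']; ring
    rw [← h2]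
    calc p * Real.log (1 / (n * p)) ≤ p * (1 / (n * p) - 1) :=
          mul_le_mul_of_nonneg_left h1 hp
      _ = 1 / n - p := by field_simp

/-- Among all input distributions with mass `α` on input `0`, the mutual
information is at most `(1 − α) C*` where `C* = log s − H(W(1,·))`. -/
theorem stmt7 (r s : ℕ) (W : Fin (r + 3) → Fin (s + 2) → ℝ) (hW : PTTOneWay W)
    (α : ℝ) (hα0 : 0 ≤ α) (hα1 : α ≤ 1)
    (Q : Fin (r + 3) → ℝ) (hQ : IsProbDist Q) (hQ0 : Q 0 = α) :
    mutInfo Q W ≤ (1 - α) * (Real.log ((s : ℝ) + 2) - ent (fun y => W 1 y)) := by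
  obtain ⟨hWnn, hWrow, hW0, hWperm, -⟩ := hW
  obtain ⟨hQnn, hQsum⟩ := hQ
  have hn : (0:ℝ) < (s : ℝ) + 2 := by positivity
  have hPnn : ∀ y, 0 ≤ outDist Q W y := fun y =>
    Finset.sum_nonneg fun x _ => mul_nonneg (hQnn x) (hWnn x y)
  have hPsum : ∑ y, outDist Q W y = 1 := by
    unfold outDist
    rw [Finset.sum_comm]
    simp_rw [← Finset.mul_sum, hWrow, mul_one]
    exact hQsum
  -- decomposition of the mutual information
  have key : mutInfo Q W = (∑ x, Q x * (∑ y, W x y * Real.log (W x y)))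
      - ∑ y, outDist Q W y * Real.log (outDist Q W y) := by
    unfold mutInfo
    have hterm : ∀ (x : Fin (r+3)) (y : Fin (s+2)),
        Q x * W x y * Real.log (W x y / outDist Q W y)
        = Q x * (W x y * Real.log (W x y)) - Q x * W x y * Real.log (outDist Q W y) := by
      intro x y
      rcases eq_or_lt_of_le (hQnn x) with hq | hq
      · simp [← hq]
      rcases eq_or_lt_of_le (hWnn x y) with hw | hw
      · simp [← hw]
      have hPy : 0 < outDist Q W y :=
        lt_of_lt_of_le (mul_pos hq hw)
          (Finset.single_le_sum (fun i _ => mul_nonneg (hQnn i) (hWnn i y))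
            (Finset.mem_univ x))
      rw [Real.log_div hw.ne' hPy.ne']; ring
    simp_rw [hterm]
    simp_rw [Finset.sum_sub_distrib]
    congr 1
    · apply Finset.sum_congr rfl
      intro x _
      rw [Finset.mul_sum]
    · rw [Finset.sum_comm]
      apply Finset.sum_congr rfl
      intro y _
      unfold outDist
      rw [Finset.sum_mul]
  -- row entropies
  have row0 : ∑ y, W 0 y * Real.log (W 0 y) = -(Real.log ((s:ℝ)+2)) := by
    simp_rw [hW0]
    rw [Finset.sum_const, Finset.card_univ, Fintype.card_fin, nsmul_eq_mul,
      one_div, Real.log_inv]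
    push_cast
    field_simp
  have rowx : ∀ x : Fin (r+3), x ≠ 0 →
      ∑ y, W x y * Real.log (W x y) = ∑ y, W 1 y * Real.log (W 1 y) := by
    intro x hx
    obtain ⟨σ, hσ⟩ := hWperm x hx
    simp_rw [hσ]
    exact Equiv.sum_comp σ (fun y => W 1 y * Real.log (W 1 y))
  have hsum1 : ∑ x ∈ Finset.univ.erase (0 : Fin (r+3)), Q x = 1 - α := by
    have h := Finset.add_sum_erase Finset.univ Q (Finset.mem_univ (0 : Fin (r+3)))
    rw [hQsum, hQ0] at h
    linarith
  have hsplit : ∑ x, Q x * (∑ y, W x y * Real.log (W x y))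
      = α * (-(Real.log ((s:ℝ)+2))) + (1 - α) * (∑ y, W 1 y * Real.log (W 1 y)) := by
    rw [← Finset.add_sum_erase Finset.univ _ (Finset.mem_univ (0 : Fin (r+3))), hQ0, row0]
    congr 1
    rw [← hsum1, Finset.sum_mul]
    apply Finset.sum_congr rfl
    intro x hx
    rw [rowx x (Finset.ne_of_mem_erase hx)]
  -- entropy of the output distribution is at most log (s+2)
  have hent : -(Real.log ((s:ℝ)+2)) ≤ ∑ y, outDist Q W y * Real.log (outDist Q W y) := by
    have hb : ∑ y, outDist Q W y * (-(Real.log ((s:ℝ)+2)) - Real.log (outDist Q W y))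
        ≤ ∑ y : Fin (s+2), (1 / ((s:ℝ)+2) - outDist Q W y) :=
      Finset.sum_le_sum fun y _ => perTermBound _ _ hn (hPnn y)
    have h1 : ∑ y : Fin (s+2), (1 / ((s:ℝ)+2) - outDist Q W y) = 0 := by
      rw [Finset.sum_sub_distrib, hPsum, Finset.sum_const, Finset.card_univ,
        Fintype.card_fin, nsmul_eq_mul]
      push_cast
      field_simp
      ring
    have h2 : ∑ y, outDist Q W y * (-(Real.log ((s:ℝ)+2)) - Real.log (outDist Q W y))
        = -(Real.log ((s:ℝ)+2)) - ∑ y, outDist Q W y * Real.log (outDist Q W y) := by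
      simp_rw [mul_sub]
      rw [Finset.sum_sub_distrib, ← Finset.sum_mul, hPsum, one_mul]
    rw [h2, h1] at hb
    linarith
  rw [key, hsplit]
  unfold ent
  simp only
  nlinarith [hent]
end
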